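/- Define the $2 \times 2$ matrices $M_{PS}(\phi) = \begin{pmatrix} 1 & 0 \\ 0 & e^{i\phi} \end{pmatrix}$, $M_{BS} = \tfrac{1}{\sqrt{2}} \begin{pmatrix} i & 1 \\ 1 & i \end{pmatrix}$, and $M_{MZI}(\theta) = M_{BS}\, M_{PS}(\theta)\, M_{BS}$, so that $M_{MZI}(\theta) = e^{i(\theta+\pi)/2} \begin{pmatrix} \sin(\theta/2) & \cos(\theta/2) \\ \cos(\theta/2) & -\sin(\theta/2) \end{pmatrix}$. Then for every $(a, b) \in \mathbb{C}^2$ there exist real phases $\theta, \phi$ such that $M_{MZI}(\theta)\, M_{PS}(\phi) \begin{pmatrix} a \\ b \end{pmatrix} = \begin{pmatrix} c \\ 0 \end{pmatrix}$ for some $c \in \mathbb{C}$ with $|c| = \sqrt{|a|^2 + |b|^2}$. -/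

import Mathlib

open Matrix

section MZIAux
open Complex

private lemma mzi_pref (θ : ℝ) : Complex.exp (I * ((θ:ℂ) + (Real.pi:ℂ)) / 2) = I * Complex.exp (I * θ / 2) := by
  rw [show I * ((θ:ℂ) + (Real.pi:ℂ)) / 2 = (Real.pi/2 : ℝ) * I + I * θ / 2 by push_cast; ring,
    Complex.exp_add, Complex.exp_mul_I]
  push_cast
  simp [Real.cos_pi_div_two, Real.sin_pi_div_two]

private lemma mzi_hsin (θ : ℝ) : Complex.exp (I * ((θ:ℂ) + (Real.pi:ℂ)) / 2) * (Real.sin (θ/2) : ℂ)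
    = (Complex.exp (I * θ) - 1) / 2 := by
  rw [mzi_pref]
  have hw : Complex.exp (I * θ) = Complex.exp (I * θ / 2) * Complex.exp (I * θ / 2) := by
    rw [← Complex.exp_add]; ring_nf
  rw [hw, Complex.ofReal_sin, Complex.sin, show -((θ/2 : ℝ) : ℂ) * I = -(I * θ / 2) by push_cast; ring,
    show ((θ/2 : ℝ) : ℂ) * I = I * θ / 2 by push_cast; ring, Complex.exp_neg]
  have hne : Complex.exp (I * θ / 2) ≠ 0 := Complex.exp_ne_zero _
  field_simp
  ring_nf
  rw [Complex.I_sq]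
  ring

private lemma mzi_hcos (θ : ℝ) : Complex.exp (I * ((θ:ℂ) + (Real.pi:ℂ)) / 2) * (Real.cos (θ/2) : ℂ)
    = I * (Complex.exp (I * θ) + 1) / 2 := by
  rw [mzi_pref]
  have hw : Complex.exp (I * θ) = Complex.exp (I * θ / 2) * Complex.exp (I * θ / 2) := by
    rw [← Complex.exp_add]; ring_nf
  rw [hw, Complex.ofReal_cos, Complex.cos, show -((θ/2 : ℝ) : ℂ) * I = -(I * θ / 2) by push_cast; ring,
    show ((θ/2 : ℝ) : ℂ) * I = I * θ / 2 by push_cast; ring, Complex.exp_neg]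
  have hne : Complex.exp (I * θ / 2) ≠ 0 := Complex.exp_ne_zero _
  field_simp

private lemma mzi_matrix_part (θ : ℝ) :
    ((1 / (Real.sqrt 2 : ℂ)) • !![Complex.I, 1; 1, Complex.I]) * !![1, 0; 0, Complex.exp (Complex.I * (θ : ℂ))]
      * ((1 / (Real.sqrt 2 : ℂ)) • !![Complex.I, 1; 1, Complex.I]) =
    Complex.exp (Complex.I * ((θ : ℂ) + (Real.pi : ℂ)) / 2) •
        !![(Real.sin (θ / 2) : ℂ), (Real.cos (θ / 2) : ℂ);
           (Real.cos (θ / 2) : ℂ), -(Real.sin (θ / 2) : ℂ)] := by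
  have h2 : ((Real.sqrt 2 : ℂ)) * (Real.sqrt 2 : ℂ) = 2 := by
    rw [← Complex.ofReal_mul, Real.mul_self_sqrt (by norm_num)]
    norm_num
  have hne : (Real.sqrt 2 : ℂ) ≠ 0 := by
    intro h; rw [h] at h2; simp at h2
  have hi : ((Real.sqrt 2 : ℂ))⁻¹ * ((Real.sqrt 2 : ℂ))⁻¹ = (2:ℂ)⁻¹ := by
    rw [← mul_inv, h2]
  have hs := mzi_hsin θ; have hc := mzi_hcos θ
  push_cast at hs hc
  ext i j
  fin_cases i <;> fin_cases j <;>
    simp [Matrix.mul_apply, Fin.sum_univ_two, Matrix.smul_apply]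
  · rw [hs]
    linear_combination (Complex.I*Complex.I + Complex.exp (Complex.I*(θ:ℂ))) * hi
      + (1/2 : ℂ) * Complex.I_mul_I
  · rw [hc]
    linear_combination (Complex.I*(1+Complex.exp (Complex.I*(θ:ℂ)))) * hi
  · rw [hc]
    linear_combination (Complex.I*(1+Complex.exp (Complex.I*(θ:ℂ)))) * hi
  · rw [hs]
    linear_combination (1 + Complex.I*Complex.I*Complex.exp (Complex.I*(θ:ℂ))) * hi
      + (Complex.exp (Complex.I*(θ:ℂ))/2) * Complex.I_mul_I

private lemma mzi_elim_part (a b : ℂ) : ∃ θ φ : ℝ, ∃ c : ℂ,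
    ((Complex.exp (Complex.I * ((θ : ℂ) + (Real.pi : ℂ)) / 2) •
        !![(Real.sin (θ / 2) : ℂ), (Real.cos (θ / 2) : ℂ);
           (Real.cos (θ / 2) : ℂ), -(Real.sin (θ / 2) : ℂ)]) *
      !![1, 0; 0, Complex.exp (Complex.I * (φ : ℂ))]) *ᵥ ![a, b] = ![c, 0] ∧
    ‖c‖ = Real.sqrt (‖a‖ ^ 2 + ‖b‖ ^ 2) := by
  by_cases h : a = 0 ∧ b = 0
  · obtain ⟨ha, hb⟩ := h
    refine ⟨0, 0, 0, ?_, by simp [ha, hb]⟩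
    subst ha hb
    funext i
    fin_cases i <;>
      simp [Matrix.mulVec, dotProduct, Fin.sum_univ_two, Matrix.mul_apply]
  · set x := ‖a‖ with hx
    set y := ‖b‖ with hy
    set r := Real.sqrt (x ^ 2 + y ^ 2) with hr
    have hxy : 0 < x ^ 2 + y ^ 2 := by
      rcases not_and_or.mp h with h' | h'
      · have h1 : 0 < x := norm_pos_iff.mpr h'
        nlinarith [sq_nonneg y]
      · have h1 : 0 < y := norm_pos_iff.mpr h'
        nlinarith [sq_nonneg x]
    have hrpos : 0 < r := Real.sqrt_pos.mpr hxy
    have hr2 : r ^ 2 = x ^ 2 + y ^ 2 := Real.sq_sqrt hxy.le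
    set z : ℂ := (y : ℂ) + (x : ℂ) * Complex.I with hzdef
    have hzre : z.re = y := by simp [hzdef]
    have hzim : z.im = x := by simp [hzdef]
    have habsz : ‖z‖ = r := by
      rw [Complex.norm_def, Complex.normSq_apply, hzre, hzim, hr]
      congr 1
      ring
    have hzne : z ≠ 0 := by
      intro h0
      rw [h0, norm_zero] at habsz
      exact hrpos.ne' habsz.symm
    refine ⟨2 * z.arg, a.arg - b.arg,
      Complex.exp (Complex.I * ((2 * z.arg : ℝ) + (Real.pi : ℂ)) / 2) *
        Complex.exp ((a.arg : ℂ) * Complex.I) * (r : ℂ), ?_, ?_⟩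
    · have e1 : Complex.sin ((z.arg : ℝ) : ℂ) = (x : ℂ) / (r : ℂ) := by
        rw [← Complex.ofReal_sin, Complex.sin_arg, hzim, habsz]
        push_cast
        ring
      have e2 : Complex.cos ((z.arg : ℝ) : ℂ) = (y : ℂ) / (r : ℂ) := by
        rw [← Complex.ofReal_cos, Complex.cos_arg hzne, hzre, habsz]
        push_cast
        ring
      have e3 : Complex.exp (Complex.I * ((a.arg : ℂ) - (b.arg : ℂ))) * b
          = (y : ℂ) * Complex.exp ((a.arg : ℂ) * Complex.I) := by
        have key : Complex.exp (Complex.I * ((a.arg : ℂ) - (b.arg : ℂ))) *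
            Complex.exp ((b.arg : ℂ) * Complex.I) = Complex.exp ((a.arg : ℂ) * Complex.I) := by
          rw [← Complex.exp_add]
          congr 1
          ring
        calc Complex.exp (Complex.I * ((a.arg : ℂ) - (b.arg : ℂ))) * b
            = Complex.exp (Complex.I * ((a.arg : ℂ) - (b.arg : ℂ))) *
              ((‖b‖ : ℂ) * Complex.exp ((b.arg : ℂ) * Complex.I)) := by
              rw [Complex.norm_mul_exp_arg_mul_I]
          _ = (y : ℂ) * (Complex.exp (Complex.I * ((a.arg : ℂ) - (b.arg : ℂ))) *
              Complex.exp ((b.arg : ℂ) * Complex.I)) := by rw [← hy]; ring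
          _ = (y : ℂ) * Complex.exp ((a.arg : ℂ) * Complex.I) := by rw [key]
      have e4 : a = (x : ℂ) * Complex.exp ((a.arg : ℂ) * Complex.I) := by
        conv_lhs => rw [← Complex.norm_mul_exp_arg_mul_I a]
      have e5 : ((r : ℂ)) ^ 2 = (x : ℂ) ^ 2 + (y : ℂ) ^ 2 := by exact_mod_cast hr2
      have hrne : ((r : ℝ) : ℂ) ≠ 0 := Complex.ofReal_ne_zero.mpr hrpos.ne'
      have e1' : Complex.sin ((z.arg : ℝ) : ℂ) * (r : ℂ) = (x : ℂ) := by
        rw [e1]; field_simp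
      have e2' : Complex.cos ((z.arg : ℝ) : ℂ) * (r : ℂ) = (y : ℂ) := by
        rw [e2]; field_simp
      set p := Complex.exp (Complex.I * (2 * (z.arg : ℂ) + (Real.pi : ℂ)) / 2) with hp
      set E := Complex.exp ((a.arg : ℂ) * Complex.I) with hE
      funext i
      fin_cases i <;>
        simp [Matrix.mulVec, dotProduct, Fin.sum_univ_two, Matrix.mul_apply, ← hp, ← hE]
      · apply mul_left_cancel₀ hrne
        linear_combination p * a * e1' + p * (Complex.exp (Complex.I * ((a.arg : ℂ) - (b.arg : ℂ))) * b) * e2'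
          + p * (y : ℂ) * e3 + p * (x : ℂ) * e4 - p * E * e5
      · apply mul_left_cancel₀ hrne
        linear_combination p * a * e2' - p * (Complex.exp (Complex.I * ((a.arg : ℂ) - (b.arg : ℂ))) * b) * e1'
          + p * (y : ℂ) * e4 - p * (x : ℂ) * e3
    · rw [norm_mul, norm_mul]
      rw [show Complex.I * ((2 * z.arg : ℝ) + (Real.pi : ℂ)) / 2
          = ((2 * z.arg + Real.pi) / 2 : ℝ) * Complex.I by push_cast; ring]
      rw [Complex.norm_exp_ofReal_mul_I, Complex.norm_exp_ofReal_mul_I]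
      simp [abs_of_pos hrpos, hr]

end MZIAux

/-- Mach–Zehnder elimination: with the phase-shifter matrix `M_PS(φ)`, the balanced
beamsplitter `M_BS`, and the Mach–Zehnder interferometer
`M_MZI(θ) = M_BS M_PS(θ) M_BS = e^{i(θ+π)/2} [[sin(θ/2), cos(θ/2)], [cos(θ/2), -sin(θ/2)]]`,
for any input amplitudes `(a, b) ∈ ℂ²` there exist phases `θ, φ` routing all amplitude
to the first mode: `M_MZI(θ) M_PS(φ) (a, b)ᵀ = (c, 0)ᵀ` with `|c| = √(|a|² + |b|²)`. -/
theorem mzi_elimination :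
    let MPS : ℝ → Matrix (Fin 2) (Fin 2) ℂ :=
      fun φ => !![1, 0; 0, Complex.exp (Complex.I * (φ : ℂ))]
    let MBS : Matrix (Fin 2) (Fin 2) ℂ :=
      (1 / (Real.sqrt 2 : ℂ)) • !![Complex.I, 1; 1, Complex.I]
    let MMZI : ℝ → Matrix (Fin 2) (Fin 2) ℂ := fun θ => MBS * MPS θ * MBS
    (∀ θ : ℝ, MMZI θ =
      Complex.exp (Complex.I * ((θ : ℂ) + (Real.pi : ℂ)) / 2) •
        !![(Real.sin (θ / 2) : ℂ), (Real.cos (θ / 2) : ℂ);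
           (Real.cos (θ / 2) : ℂ), -(Real.sin (θ / 2) : ℂ)]) ∧
    (∀ a b : ℂ, ∃ θ φ : ℝ, ∃ c : ℂ,
      (MMZI θ * MPS φ) *ᵥ ![a, b] = ![c, 0] ∧
      ‖c‖ = Real.sqrt (‖a‖ ^ 2 + ‖b‖ ^ 2)) := by
  intro MPS MBS MMZI
  constructor
  · intro θ
    simp only [MMZI, MBS, MPS]
    exact mzi_matrix_part θ
  · intro a b
    obtain ⟨θ, φ, c, h1, h2⟩ := mzi_elim_part a b
    refine ⟨θ, φ, c, ?_, h2⟩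
    simp only [MMZI, MBS, MPS]
    rw [mzi_matrix_part θ]
    exact h1
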